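/- For every permutation π ∈ S_n, the generating function for partitions μ such that (μ, π) is a standard labeled partition with at most n parts is q^{maj(π)}/(q)_n, i.e., Σ_{μ : (μ,π) standard} q^{|μ|} = q^{maj(π)} / ∏_{i=1}^n (1-q^i). -/

import Mathlib

open Finset

def maj {n : ℕ} (π : Equiv.Perm (Fin n)) : ℕ :=
  ∑ i ∈ Finset.range n, if h : i + 1 < n then
    (if π ⟨i + 1, h⟩ < π ⟨i, Nat.lt_of_succ_lt h⟩ then i + 1 else 0) else 0

/-- A labeled partition `(μ, π)` is standard if `π i > π (i+1)` implies `μ i > μ (i+1)`. -/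
def IsStandard {n : ℕ} (μ : Fin n → ℕ) (π : Equiv.Perm (Fin n)) : Prop :=
  ∀ i : ℕ, ∀ h : i + 1 < n,
    π ⟨i + 1, h⟩ < π ⟨i, Nat.lt_of_succ_lt h⟩ → μ ⟨i + 1, h⟩ < μ ⟨i, Nat.lt_of_succ_lt h⟩

/-- `(q)_n = ∏_{i=1}^n (1 - q^i)` as a formal power series. -/
noncomputable def qPoch (n : ℕ) : PowerSeries ℚ :=
  ∏ i ∈ Finset.range n, (1 - PowerSeries.X ^ (i + 1))

namespace GenfunAux

variable {n : ℕ}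

/-- descent indicator -/
def D {n : ℕ} (π : Equiv.Perm (Fin n)) (i : ℕ) : ℕ :=
  if h : i + 1 < n then
    (if π ⟨i + 1, h⟩ < π ⟨i, Nat.lt_of_succ_lt h⟩ then 1 else 0) else 0

lemma maj_eq (π : Equiv.Perm (Fin n)) : maj π = ∑ i ∈ range n, (i + 1) * D π i := by
  unfold maj D
  refine Finset.sum_congr rfl fun i _ => ?_
  split_ifs <;> simp

/-- extend a `Fin n`-indexed family by zero -/
def ext (μ : Fin n → ℕ) (j : ℕ) : ℕ := if h : j < n then μ ⟨j, h⟩ else 0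

lemma sum_ext (μ : Fin n → ℕ) : ∑ i, μ i = ∑ j ∈ range n, ext μ j := by
  rw [← Fin.sum_univ_eq_sum_range]
  exact Finset.sum_congr rfl fun i _ => by simp [ext, i.isLt]

lemma sum_weighted_ext (μ : Fin n → ℕ) :
    ∑ i : Fin n, ((i : ℕ) + 1) * μ i = ∑ j ∈ range n, (j + 1) * ext μ j := by
  rw [← Fin.sum_univ_eq_sum_range]
  exact Finset.sum_congr rfl fun i _ => by simp [ext, i.isLt]

lemma swap_sum (f : ℕ → ℕ) (n : ℕ) :
    ∑ i ∈ range n, ∑ j ∈ Ico i n, f j = ∑ j ∈ range n, (j + 1) * f j := by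
  induction n with
  | zero => simp
  | succ n ih =>
    rw [Finset.sum_range_succ, Finset.sum_range_succ]
    have h1 : ∀ i ∈ range n, ∑ j ∈ Ico i (n + 1), f j = (∑ j ∈ Ico i n, f j) + f n := by
      intro i hi
      rw [Finset.sum_Ico_succ_top (le_of_lt (Finset.mem_range.mp hi))]
    rw [Finset.sum_congr rfl h1, Finset.sum_add_distrib, ih]
    simp [Finset.sum_Ico_succ_top (le_refl n)]
    ring

def Phi (π : Equiv.Perm (Fin n)) (ν : Fin n → ℕ) : Fin n → ℕ :=
  fun i => ∑ j ∈ Ico (i : ℕ) n, (ext ν j + D π j)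

lemma ext_Phi (π : Equiv.Perm (Fin n)) (ν : Fin n → ℕ) (j : ℕ) :
    ext (Phi π ν) j = ∑ l ∈ Ico j n, (ext ν l + D π l) := by
  unfold ext Phi
  split_ifs with h
  · rfl
  · rw [Finset.Ico_eq_empty (by omega), Finset.sum_empty]

lemma ext_Phi_succ (π : Equiv.Perm (Fin n)) (ν : Fin n → ℕ) (j : ℕ) (hj : j < n) :
    ext (Phi π ν) j = (ext ν j + D π j) + ext (Phi π ν) (j + 1) := by
  rw [ext_Phi, ext_Phi, Finset.sum_eq_sum_Ico_succ_bot hj]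

lemma Phi_antitone (π : Equiv.Perm (Fin n)) (ν : Fin n → ℕ) : Antitone (Phi π ν) := by
  intro i i' h
  exact Finset.sum_le_sum_of_subset (Finset.Ico_subset_Ico h le_rfl)

lemma Phi_standard (π : Equiv.Perm (Fin n)) (ν : Fin n → ℕ) : IsStandard (Phi π ν) π := by
  intro i h hd
  have h1 : ext (Phi π ν) i = (ext ν i + D π i) + ext (Phi π ν) (i + 1) :=
    ext_Phi_succ π ν i (Nat.lt_of_succ_lt h)
  have hD : D π i = 1 := by unfold D; rw [dif_pos h, if_pos hd]
  have e1 : ext (Phi π ν) i = Phi π ν ⟨i, Nat.lt_of_succ_lt h⟩ := by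
    simp [ext, Nat.lt_of_succ_lt h]
  have e2 : ext (Phi π ν) (i + 1) = Phi π ν ⟨i + 1, h⟩ := by simp [ext, h]
  omega

lemma sum_Phi (π : Equiv.Perm (Fin n)) (ν : Fin n → ℕ) :
    ∑ i, Phi π ν i = (∑ i : Fin n, ((i : ℕ) + 1) * ν i) + maj π := by
  rw [sum_ext, Finset.sum_congr rfl (fun j hj => ext_Phi π ν j), swap_sum, maj_eq,
    sum_weighted_ext]
  rw [← Finset.sum_add_distrib]
  exact Finset.sum_congr rfl fun j _ => by ring


lemma Phi_inj (π : Equiv.Perm (Fin n)) : Function.Injective (Phi π) := by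
  intro ν ν' h
  funext i
  have h1 := ext_Phi_succ π ν i.val i.isLt
  have h2 := ext_Phi_succ π ν' i.val i.isLt
  rw [h] at h1
  have e1 : ext ν i.val = ν i := by simp [ext, i.isLt]
  have e2 : ext ν' i.val = ν' i := by simp [ext, i.isLt]
  omega

lemma hkey (π : Equiv.Perm (Fin n)) (μ : Fin n → ℕ) (hA : Antitone μ) (hS : IsStandard μ π)
    (j : ℕ) : ext μ (j + 1) + D π j ≤ ext μ j := by
  by_cases h : j + 1 < n
  · have hj : j < n := Nat.lt_of_succ_lt h
    have e1 : ext μ (j + 1) = μ ⟨j + 1, h⟩ := by simp [ext, h]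
    have e2 : ext μ j = μ ⟨j, hj⟩ := by simp [ext, hj]
    unfold D
    rw [dif_pos h]
    split_ifs with hd
    · have := hS j h hd; omega
    · have : μ ⟨j + 1, h⟩ ≤ μ ⟨j, hj⟩ := hA (by simp [Fin.le_def])
      omega
  · have e1 : ext μ (j + 1) = 0 := by simp [ext]; omega
    have e2 : D π j = 0 := by unfold D; rw [dif_neg h]
    simp [e1, e2]

lemma ext_antitone (μ : Fin n → ℕ) (hA : Antitone μ) : ∀ j, ext μ (j + 1) ≤ ext μ j := by
  intro j
  unfold ext
  split_ifs with h1 h2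
  · exact hA (by simp [Fin.le_def])
  · omega
  · exact Nat.zero_le _
  · exact Nat.zero_le _

lemma tele (g : ℕ → ℕ) (hg : ∀ j, g (j + 1) ≤ g j) :
    ∀ b a, a ≤ b → ∑ j ∈ Ico a b, (g j - g (j + 1)) = g a - g b := by
  have hmono : ∀ a b, a ≤ b → g b ≤ g a := fun a b h =>
    antitone_nat_of_succ_le hg h
  intro b
  induction b with
  | zero => intro a ha; simp_all
  | succ b ih =>
    intro a ha
    rcases Nat.lt_or_ge a (b + 1) with h | h
    · have hab : a ≤ b := by omega
      rw [Finset.sum_Ico_succ_top hab, ih a hab]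
      have := hmono a b hab
      have := hg b
      omega
    · have : a = b + 1 := by omega
      subst this
      simp

lemma Phi_surj (π : Equiv.Perm (Fin n)) (μ : Fin n → ℕ) (hA : Antitone μ)
    (hS : IsStandard μ π) : ∃ ν, Phi π ν = μ := by
  set ν : Fin n → ℕ := fun i => ext μ (i : ℕ) - (ext μ ((i : ℕ) + 1) + D π (i : ℕ)) with hν
  refine ⟨ν, ?_⟩
  funext i
  have hterm : ∀ j, j < n → ext ν j + D π j = ext μ j - ext μ (j + 1) := by
    intro j hj
    have h1 := hkey π μ hA hS j
    have e : ext ν j = ext μ j - (ext μ (j + 1) + D π j) := by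
      simp only [hν, ext, dif_pos hj]
    omega
  unfold Phi
  rw [Finset.sum_congr rfl (fun j hj => hterm j (Finset.mem_Ico.mp hj).2)]
  rw [tele (ext μ) (ext_antitone μ hA) n i.val (le_of_lt i.isLt)]
  have : ext μ n = 0 := by simp [ext]
  simp [this, ext, i.isLt]

lemma sum_ge_maj (π : Equiv.Perm (Fin n)) (μ : Fin n → ℕ) (hA : Antitone μ)
    (hS : IsStandard μ π) : maj π ≤ ∑ i, μ i := by
  obtain ⟨ν, rfl⟩ := Phi_surj π μ hA hS
  rw [sum_Phi]
  omega

lemma card_standard (π : Equiv.Perm (Fin n)) (k : ℕ) :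
    Nat.card {μ : Fin n → ℕ // Antitone μ ∧ IsStandard μ π ∧ ∑ i, μ i = k + maj π}
      = Nat.card {ν : Fin n → ℕ // ∑ i : Fin n, ((i : ℕ) + 1) * ν i = k} := by
  refine (Nat.card_congr (Equiv.ofBijective
    (fun x => ⟨Phi π x.val, Phi_antitone π x.val, Phi_standard π x.val, by
      rw [sum_Phi, x.prop]⟩) ⟨?_, ?_⟩)).symm
  · intro x y hxy
    exact Subtype.ext (Phi_inj π (congrArg Subtype.val hxy))
  · rintro ⟨μ, hA, hS, hsum⟩
    obtain ⟨ν, rfl⟩ := Phi_surj π μ hA hS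
    have hk : ∑ i : Fin n, ((i : ℕ) + 1) * ν i = k := by
      rw [sum_Phi] at hsum; omega
    exact ⟨⟨ν, hk⟩, rfl⟩

lemma finite_aux {n k : ℕ} (p : (Fin n → ℕ) → Prop)
    (hp : ∀ ν, p ν → ∀ i, ν i ≤ k) : Finite {ν : Fin n → ℕ // p ν} := by
  refine Finite.of_injective
    (fun x : {ν : Fin n → ℕ // p ν} => fun i : Fin n =>
      (⟨x.val i, Nat.lt_succ_of_le (hp x.val x.prop i)⟩ : Fin (k + 1))) ?_
  intro x y hxy
  refine Subtype.ext (funext fun i => ?_)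
  exact congrArg Fin.val (congrFun hxy i)

lemma bound_aux {n k : ℕ} (ν : Fin n → ℕ) (h : ∑ i : Fin n, ((i : ℕ) + 1) * ν i = k)
    (i : Fin n) : ν i ≤ k := by
  calc ν i ≤ ((i : ℕ) + 1) * ν i := Nat.le_mul_of_pos_left _ (Nat.succ_pos _)
    _ ≤ ∑ i : Fin n, ((i : ℕ) + 1) * ν i :=
        Finset.single_le_sum (f := fun j : Fin n => ((j : ℕ) + 1) * ν j) (fun j _ => Nat.zero_le _) (Finset.mem_univ i)
    _ = k := h

instance finite_count {n k : ℕ} : Finite {ν : Fin n → ℕ // ∑ i : Fin n, ((i : ℕ) + 1) * ν i = k} :=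
  finite_aux _ bound_aux

/-- the number of `ν` with weighted sum `k` -/
noncomputable def f (n k : ℕ) : ℕ := Nat.card {ν : Fin n → ℕ // ∑ i : Fin n, ((i : ℕ) + 1) * ν i = k}

lemma f_zero (k : ℕ) : f 0 k = if k = 0 then 1 else 0 := by
  unfold f
  split_ifs with hk
  · subst hk
    rw [Nat.card_eq_one_iff_unique]
    constructor
    · refine ⟨fun x y => Subtype.ext (funext fun i => i.elim0)⟩
    · exact ⟨⟨fun i => i.elim0, by simp⟩⟩
  · rw [Nat.card_eq_zero]
    left
    refine ⟨fun x => hk ?_⟩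
    rw [← x.prop]
    simp

lemma S_eq {n : ℕ} (ν : Fin (n + 1) → ℕ) :
    ∑ i : Fin (n + 1), ((i : ℕ) + 1) * ν i
      = (∑ i : Fin n, ((i : ℕ) + 1) * ν i.castSucc) + (n + 1) * ν (Fin.last n) := by
  rw [Fin.sum_univ_castSucc]
  simp

lemma split (n k : ℕ) : f (n + 1) k
      = Nat.card {ν : Fin (n + 1) → ℕ //
          (∑ i : Fin (n + 1), ((i : ℕ) + 1) * ν i = k) ∧ ν (Fin.last n) = 0}
        + Nat.card {ν : Fin (n + 1) → ℕ //
          (∑ i : Fin (n + 1), ((i : ℕ) + 1) * ν i = k) ∧ ¬ ν (Fin.last n) = 0} := by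
  classical
  haveI hfinA : Finite {ν : Fin (n + 1) → ℕ //
      (∑ i : Fin (n + 1), ((i : ℕ) + 1) * ν i = k) ∧ ν (Fin.last n) = 0} :=
    finite_aux _ (fun ν h i => bound_aux ν h.1 i)
  haveI hfinB : Finite {ν : Fin (n + 1) → ℕ //
      (∑ i : Fin (n + 1), ((i : ℕ) + 1) * ν i = k) ∧ ¬ ν (Fin.last n) = 0} :=
    finite_aux _ (fun ν h i => bound_aux ν h.1 i)
  have Etot := (Equiv.sumCongr
    (Equiv.subtypeSubtypeEquivSubtypeInter
      (fun ν : Fin (n + 1) → ℕ => ∑ i : Fin (n + 1), ((i : ℕ) + 1) * ν i = k)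
      (fun ν => ν (Fin.last n) = 0)).symm
    (Equiv.subtypeSubtypeEquivSubtypeInter
      (fun ν : Fin (n + 1) → ℕ => ∑ i : Fin (n + 1), ((i : ℕ) + 1) * ν i = k)
      (fun ν => ¬ ν (Fin.last n) = 0)).symm).trans
    (Equiv.sumCompl (fun x : {ν : Fin (n + 1) → ℕ //
      ∑ i : Fin (n + 1), ((i : ℕ) + 1) * ν i = k} => x.val (Fin.last n) = 0))
  unfold f
  rw [Nat.card_congr Etot.symm, Nat.card_sum]

lemma cardA (n k : ℕ) : Nat.card {ν : Fin (n + 1) → ℕ //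
      (∑ i : Fin (n + 1), ((i : ℕ) + 1) * ν i = k) ∧ ν (Fin.last n) = 0} = f n k := by
    unfold f
    refine Nat.card_congr ⟨fun x => ⟨Fin.init x.val, ?_⟩, fun y => ⟨Fin.snoc y.val 0, ?_⟩,
      ?_, ?_⟩
    · obtain ⟨h1, h2⟩ := x.prop
      rw [S_eq, h2] at h1
      simpa [Fin.init] using h1
    · constructor
      · rw [S_eq]
        simp [y.prop]
      · simp
    · rintro ⟨ν, h1, h2⟩
      refine Subtype.ext ?_
      simp only
      rw [← h2]
      exact Fin.snoc_init_self ν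
    · rintro ⟨ν, h1⟩
      refine Subtype.ext ?_
      simp

lemma cardB (n k : ℕ) : Nat.card {ν : Fin (n + 1) → ℕ //
      (∑ i : Fin (n + 1), ((i : ℕ) + 1) * ν i = k) ∧ ¬ ν (Fin.last n) = 0}
      = if n + 1 ≤ k then f (n + 1) (k - (n + 1)) else 0 := by
  classical
    split_ifs with hk
    · unfold f
      have hto : ∀ ν : Fin (n + 1) → ℕ, (∑ i : Fin (n + 1), ((i : ℕ) + 1) * ν i = k) →
          ¬ ν (Fin.last n) = 0 →
          ∑ i : Fin (n + 1), ((i : ℕ) + 1) *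
            Function.update ν (Fin.last n) (ν (Fin.last n) - 1) i = k - (n + 1) := by
        intro ν h1 h2
        rw [S_eq] at h1 ⊢
        have e1 : ∀ i : Fin n, Function.update ν (Fin.last n) (ν (Fin.last n) - 1)
            i.castSucc = ν i.castSucc := fun i =>
          Function.update_of_ne (Fin.castSucc_lt_last i).ne _ _
        simp only [e1, Function.update_self]
        have e2 : ν (Fin.last n) = (ν (Fin.last n) - 1) + 1 := by omega
        rw [e2, Nat.mul_add, Nat.mul_one] at h1
        omega
      have hinv : ∀ ν : Fin (n + 1) → ℕ,
          (∑ i : Fin (n + 1), ((i : ℕ) + 1) * ν i = k - (n + 1)) →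
          ∑ i : Fin (n + 1), ((i : ℕ) + 1) *
            Function.update ν (Fin.last n) (ν (Fin.last n) + 1) i = k := by
        intro ν h1
        rw [S_eq] at h1 ⊢
        have e1 : ∀ i : Fin n, Function.update ν (Fin.last n) (ν (Fin.last n) + 1)
            i.castSucc = ν i.castSucc := fun i =>
          Function.update_of_ne (Fin.castSucc_lt_last i).ne _ _
        simp only [e1, Function.update_self]
        rw [Nat.mul_add, Nat.mul_one]
        omega
      have hne : ∀ ν : Fin (n + 1) → ℕ,
          ¬ Function.update ν (Fin.last n) (ν (Fin.last n) + 1) (Fin.last n) = 0 := by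
        intro ν
        simp
      refine Nat.card_congr ⟨fun x =>
          ⟨Function.update x.val (Fin.last n) (x.val (Fin.last n) - 1),
            hto x.val x.prop.1 x.prop.2⟩,
        fun y => ⟨Function.update y.val (Fin.last n) (y.val (Fin.last n) + 1),
            hinv y.val y.prop, hne y.val⟩,
        ?_, ?_⟩
      · rintro ⟨ν, h1, h2⟩
        refine Subtype.ext ?_
        simp only [Function.update_self, Function.update_idem]
        have e : ν (Fin.last n) - 1 + 1 = ν (Fin.last n) := by omega
        rw [e, Function.update_eq_self]
      · rintro ⟨ν, h1⟩
        refine Subtype.ext ?_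
        simp only [Function.update_self, Function.update_idem, Nat.add_sub_cancel]
        rw [Function.update_eq_self]
    · rw [Nat.card_eq_zero]
      left
      refine ⟨fun x => ?_⟩
      obtain ⟨h1, h2⟩ := x.prop
      rw [S_eq] at h1
      have : n + 1 ≤ (n + 1) * x.val (Fin.last n) :=
        Nat.le_mul_of_pos_right _ (Nat.pos_of_ne_zero h2)
      omega

lemma f_rec (n k : ℕ) :
    f (n + 1) k = f n k + (if n + 1 ≤ k then f (n + 1) (k - (n + 1)) else 0) := by
  rw [split, cardA, cardB]


lemma constCoeff_qPoch (n : ℕ) : PowerSeries.constantCoeff (qPoch n) = 1 := by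
  rw [qPoch, map_prod]
  refine Finset.prod_eq_one fun i _ => ?_
  rw [map_sub, map_one, map_pow, PowerSeries.constantCoeff_X, zero_pow (Nat.succ_ne_zero i),
    sub_zero]

lemma qPoch_mul_mk (n : ℕ) :
    qPoch n * PowerSeries.mk (fun k => (f n k : ℚ)) = 1 := by
  induction n with
  | zero =>
    have h1 : qPoch 0 = 1 := by simp [qPoch]
    rw [h1, one_mul]
    ext k
    rw [PowerSeries.coeff_mk, PowerSeries.coeff_one, f_zero]
    split_ifs <;> simp
  | succ n ih =>
    have h1 : qPoch (n + 1) = qPoch n * (1 - PowerSeries.X ^ (n + 1)) := by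
      rw [qPoch, qPoch, Finset.prod_range_succ]
    have h2 : (1 - PowerSeries.X ^ (n + 1)) * PowerSeries.mk (fun k => (f (n + 1) k : ℚ))
        = PowerSeries.mk (fun k => (f n k : ℚ)) := by
      ext k
      rw [sub_mul, one_mul, map_sub, PowerSeries.coeff_mk, PowerSeries.coeff_mk,
        PowerSeries.coeff_X_pow_mul', f_rec n k]
      split_ifs with h
      · rw [PowerSeries.coeff_mk]
        push_cast
        ring
      · push_cast
        ring
    rw [h1, mul_assoc, h2, ih]

lemma qPoch_inv_eq (n : ℕ) :
    (qPoch n)⁻¹ = PowerSeries.mk (fun k => (f n k : ℚ)) := by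
  rw [PowerSeries.inv_eq_iff_mul_eq_one (by rw [constCoeff_qPoch]; exact one_ne_zero),
    mul_comm]
  exact qPoch_mul_mk n

end GenfunAux

/-- The generating function, by size, for the partitions `μ` with at most `n` parts such
that `(μ, π)` is a standard labeled partition is `q^{maj π}/(q)_n` (stated
coefficientwise). -/
theorem genfun_standard_labeled (n : ℕ) (π : Equiv.Perm (Fin n)) (m : ℕ) :
    (Nat.card {μ : Fin n → ℕ // Antitone μ ∧ IsStandard μ π ∧ ∑ i, μ i = m} : ℚ)
      = PowerSeries.coeff m (PowerSeries.X ^ maj π * (qPoch n)⁻¹) := by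
  rw [GenfunAux.qPoch_inv_eq, PowerSeries.coeff_X_pow_mul']
  by_cases h : maj π ≤ m
  · obtain ⟨k, rfl⟩ : ∃ k, m = k + maj π := ⟨m - maj π, by omega⟩
    rw [if_pos h, PowerSeries.coeff_mk, GenfunAux.card_standard π k]
    have e : k + maj π - maj π = k := by omega
    rw [e]
    rfl
  · rw [if_neg h]
    have : IsEmpty {μ : Fin n → ℕ // Antitone μ ∧ IsStandard μ π ∧ ∑ i, μ i = m} := by
      refine ⟨fun x => ?_⟩
      obtain ⟨hA, hS, hsum⟩ := x.prop
      have := GenfunAux.sum_ge_maj π x.val hA hS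
      omega
    rw [Nat.card_of_isEmpty]
    simp
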